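/- Let p, q ∈ ℂ³ satisfy p₁q₃² = q₂(2p₂q₃ − p₃q₂), q₁q₃ = q₂², and p₂q₃ − p₃q₂ ≠ 0. On the hyperbolic space model H³ = {x ∈ ℝ⁴ : −x₀²+x₁²+x₂²+x₃² = −1, x₀ > 0}, define f*(x) = [p₁(−ix₀+ix₁)² + 2p₂(−ix₀+ix₁)(−x₂+ix₃) + p₃(x₂−ix₃)²]/[q₁(x₂+ix₃)² + 2q₂(−ix₀−ix₁)(x₂+ix₃) + q₃(−ix₀−ix₁)²] on the open set where the denominator is nonzero. With f̂* the degree-0 homogeneous extension to the interior of the light cone and □ = −∂²/∂x₀² + ∂²/∂x₁² + ∂²/∂x₂² + ∂²/∂x₃² the d'Alembert operator, one has □(−|x|²_L·□f̂*) = 0 and −|x|²_L·□f̂* ≢ 0; hence f* is proper biharmonic on its domain in H³. -/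

import Mathlib

open scoped BigOperators

/-- Partial derivative in the `i`-th coordinate direction on Minkowski space `ℝ⁴₁`
(coordinates `x₀,x₁,x₂,x₃`). -/
noncomputable def pd (i : Fin 4) (f : (Fin 4 → ℝ) → ℂ) (x : Fin 4 → ℝ) : ℂ :=
  deriv (fun t : ℝ => f (x + t • (Pi.single i (1 : ℝ) : Fin 4 → ℝ))) 0

/-- The d'Alembert wave operator `□ = −∂₀² + ∂₁² + ∂₂² + ∂₃²`, the tension field of
Minkowski space `ℝ⁴₁`. -/
noncomputable def box (f : (Fin 4 → ℝ) → ℂ) (x : Fin 4 → ℝ) : ℂ :=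
  -(pd 0 (pd 0 f) x) + pd 1 (pd 1 f) x + pd 2 (pd 2 f) x + pd 3 (pd 3 f) x

/-- The Lorentzian square norm `|x|²_L = (x,x)_L = −x₀² + x₁² + x₂² + x₃²`. -/
def lorSq (x : Fin 4 → ℝ) : ℝ :=
  -(x 0) ^ 2 + (x 1) ^ 2 + (x 2) ^ 2 + (x 3) ^ 2

/-- The numerator `p₁(−ix₀+ix₁)² + 2p₂(−ix₀+ix₁)(−x₂+ix₃) + p₃(x₂−ix₃)²`. -/
noncomputable def numStar (p : Fin 3 → ℂ) (x : Fin 4 → ℝ) : ℂ :=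
  p 0 * (-Complex.I * (x 0) + Complex.I * (x 1)) ^ 2
    + 2 * p 1 * (-Complex.I * (x 0) + Complex.I * (x 1)) * (-(x 2 : ℂ) + Complex.I * (x 3))
    + p 2 * ((x 2 : ℂ) - Complex.I * (x 3)) ^ 2

/-- The denominator `q₁(x₂+ix₃)² + 2q₂(−ix₀−ix₁)(x₂+ix₃) + q₃(−ix₀−ix₁)²`. -/
noncomputable def denStar (q : Fin 3 → ℂ) (x : Fin 4 → ℝ) : ℂ :=
  q 0 * ((x 2 : ℂ) + Complex.I * (x 3)) ^ 2
    + 2 * q 1 * (-Complex.I * (x 0) - Complex.I * (x 1)) * ((x 2 : ℂ) + Complex.I * (x 3))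
    + q 2 * (-Complex.I * (x 0) - Complex.I * (x 1)) ^ 2

/-- The dual function `f*` on (the cone over) `H³`; since numerator and denominator are
homogeneous of degree 2, this is also the degree-0 homogeneous extension `f̂* = f*∘π*`
to the interior of the light cone. -/
noncomputable def fStar (p q : Fin 3 → ℂ) (x : Fin 4 → ℝ) : ℂ :=
  numStar p x / denStar q x

namespace S19

noncomputable def Lf (a : Fin 4 → ℂ) (x : Fin 4 → ℝ) : ℂ :=
  a 0 * (x 0 : ℂ) + a 1 * (x 1 : ℂ) + a 2 * (x 2 : ℂ) + a 3 * (x 3 : ℂ)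

noncomputable def eta (i : Fin 4) : ℂ := if i = 0 then -1 else 1

lemma continuous_Lf (a : Fin 4 → ℂ) : Continuous (Lf a) := by
  unfold Lf; fun_prop

lemma fr (b : ℂ) {D : ℂ} (c : ℂ) (hb : b ≠ 0) (hD : D ≠ 0) (h : b * c = D) :
    ∀ z : ℂ, z / b = z * c / D := fun z => by
  rw [div_eq_div_iff hb hD, ← h]; ring

lemma pd_eq_of_hasDerivAt {f : (Fin 4 → ℝ) → ℂ} {i : Fin 4} {x : Fin 4 → ℝ} {d : ℂ}
    (h : HasDerivAt (fun t : ℝ => f (x + t • (Pi.single i (1:ℝ) : Fin 4 → ℝ))) d 0) :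
    pd i f x = d := h.deriv

lemma pd_congr {f g : (Fin 4 → ℝ) → ℂ} {U : Set (Fin 4 → ℝ)} (hU : IsOpen U)
    (hfg : ∀ y ∈ U, f y = g y) {x : Fin 4 → ℝ} (hx : x ∈ U) (i : Fin 4) :
    pd i f x = pd i g x := by
  unfold pd
  apply Filter.EventuallyEq.deriv_eq
  have hc : Continuous (fun t : ℝ => x + t • (Pi.single i (1:ℝ) : Fin 4 → ℝ)) := by
    fun_prop
  have h0 : (fun t : ℝ => x + t • (Pi.single i (1:ℝ) : Fin 4 → ℝ)) 0 ∈ U := by simpa using hx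
  have hmem := (hU.preimage hc).mem_nhds h0
  filter_upwards [hmem] with t ht using hfg _ ht

lemma slice_L (a : Fin 4 → ℂ) (i : Fin 4) (x : Fin 4 → ℝ) :
    HasDerivAt (fun t : ℝ => Lf a (x + t • (Pi.single i (1:ℝ) : Fin 4 → ℝ))) (a i) 0 := by
  have hfun : ∀ t : ℝ, Lf a (x + t • (Pi.single i (1:ℝ) : Fin 4 → ℝ))
      = Lf a x + a i * (t : ℂ) := by
    intro t
    fin_cases i <;> simp [Lf, Pi.single_apply] <;> push_cast <;> ring
  have h2 : HasDerivAt (fun t : ℝ => Lf a x + a i * (t : ℂ)) (a i) 0 := by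
    simpa using ((Complex.ofRealCLM.hasDerivAt (x := (0:ℝ))).const_mul (a i)).const_add (Lf a x)
  exact h2.congr_of_eventuallyEq (Filter.Eventually.of_forall hfun)

lemma slice_cc (i : Fin 4) (x : Fin 4 → ℝ) :
    HasDerivAt (fun t : ℝ => (((x + t • (Pi.single i (1:ℝ) : Fin 4 → ℝ)) i : ℝ) : ℂ)) 1 0 := by
  have hr : HasDerivAt (fun t : ℝ => (x + t • (Pi.single i (1:ℝ) : Fin 4 → ℝ)) i) 1 0 := by
    have hfun : ∀ t : ℝ, (x + t • (Pi.single i (1:ℝ) : Fin 4 → ℝ)) i = x i + t := by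
      intro t; simp [Pi.single_apply]
    have h2 : HasDerivAt (fun t : ℝ => x i + t) 1 0 := by
      simpa using (hasDerivAt_id (0:ℝ)).const_add (x i)
    exact h2.congr_of_eventuallyEq (Filter.Eventually.of_forall hfun)
  simpa using hr.ofReal_comp

lemma slice_SC (i : Fin 4) (x : Fin 4 → ℝ) :
    HasDerivAt (fun t : ℝ => ((lorSq (x + t • (Pi.single i (1:ℝ) : Fin 4 → ℝ)) : ℝ) : ℂ))
      (2 * eta i * (x i : ℂ)) 0 := by
  set er : ℝ := if i = 0 then -1 else 1 with her
  have hr : HasDerivAt (fun t : ℝ => lorSq (x + t • (Pi.single i (1:ℝ) : Fin 4 → ℝ)))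
      (2 * er * x i) 0 := by
    have hfun : ∀ t : ℝ, lorSq (x + t • (Pi.single i (1:ℝ) : Fin 4 → ℝ))
        = lorSq x + (2 * er * x i) * t + er * t ^ 2 := by
      intro t
      fin_cases i <;> simp [lorSq, Pi.single_apply, her] <;> ring
    have h2 : HasDerivAt (fun t : ℝ => lorSq x + (2 * er * x i) * t + er * t ^ 2)
        (2 * er * x i) 0 := by
      have ha := ((hasDerivAt_id (0:ℝ)).const_mul (2 * er * x i)).const_add (lorSq x)
      have hb := (hasDerivAt_pow 2 (0:ℝ)).const_mul er
      exact (ha.add hb).congr_deriv (by simp)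
    exact h2.congr_of_eventuallyEq (Filter.Eventually.of_forall hfun)
  have := hr.ofReal_comp
  convert this using 1
  simp only [her, eta]
  split_ifs <;> push_cast <;> ring


noncomputable def Hab (A B C : Fin 4 → ℂ) (k : ℂ) (y : Fin 4 → ℝ) : ℂ :=
  Lf A y * Lf B y / (k * (Lf C y) ^ 2)

noncomputable def H1ab (A B C : Fin 4 → ℂ) (k : ℂ) (i : Fin 4) (y : Fin 4 → ℝ) : ℂ :=
  (A i * Lf B y + Lf A y * B i) / (k * (Lf C y) ^ 2)
    - 2 * C i * (Lf A y * Lf B y) / (k * (Lf C y) ^ 3)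

noncomputable def H2ab (A B C : Fin 4 → ℂ) (k : ℂ) (i : Fin 4) (y : Fin 4 → ℝ) : ℂ :=
  2 * A i * B i / (k * (Lf C y) ^ 2)
    - 4 * C i * (A i * Lf B y + Lf A y * B i) / (k * (Lf C y) ^ 3)
    + 6 * C i ^ 2 * (Lf A y * Lf B y) / (k * (Lf C y) ^ 4)

noncomputable def Gab (A C : Fin 4 → ℂ) (k0 : ℂ) (y : Fin 4 → ℝ) : ℂ :=
  k0 * ((lorSq y : ℝ) : ℂ) * Lf A y / (Lf C y) ^ 3

noncomputable def G1ab (A C : Fin 4 → ℂ) (k0 : ℂ) (i : Fin 4) (y : Fin 4 → ℝ) : ℂ :=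
  k0 * ((2 * eta i * ((y i : ℝ) : ℂ) * Lf A y + ((lorSq y : ℝ) : ℂ) * A i) / (Lf C y) ^ 3
    - 3 * C i * (((lorSq y : ℝ) : ℂ) * Lf A y) / (Lf C y) ^ 4)

noncomputable def G2ab (A C : Fin 4 → ℂ) (k0 : ℂ) (i : Fin 4) (y : Fin 4 → ℝ) : ℂ :=
  k0 * ((2 * eta i * Lf A y + 2 * (2 * eta i * ((y i : ℝ) : ℂ)) * A i) / (Lf C y) ^ 3
    - 6 * C i * ((2 * eta i * ((y i : ℝ) : ℂ)) * Lf A y + ((lorSq y : ℝ) : ℂ) * A i) / (Lf C y) ^ 4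
    + 12 * C i ^ 2 * (((lorSq y : ℝ) : ℂ) * Lf A y) / (Lf C y) ^ 5)

variable {A B C : Fin 4 → ℂ} {k k0 : ℂ} {i : Fin 4} {y : Fin 4 → ℝ}

lemma pd_Hab (hk : k ≠ 0) (hC : Lf C y ≠ 0) :
    pd i (Hab A B C k) y = H1ab A B C k i y := by
  have sA := slice_L A i y
  have sB := slice_L B i y
  have sC := slice_L C i y
  have hdd := (sC.mul sC).const_mul k
  have hd0 : k * (Lf C (y + (0:ℝ) • (Pi.single i (1:ℝ) : Fin 4 → ℝ))
      * Lf C (y + (0:ℝ) • (Pi.single i (1:ℝ) : Fin 4 → ℝ))) ≠ 0 := by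
    simpa using mul_ne_zero hk (mul_ne_zero hC hC)
  have h := (sA.mul sB).div hdd hd0
  rw [pd_eq_of_hasDerivAt (h.congr_of_eventuallyEq
    (Filter.Eventually.of_forall fun t => by unfold Hab; simp only [Pi.mul_apply, Pi.div_apply, Pi.pow_apply, Pi.sub_apply, Pi.add_apply]; ring))]
  unfold H1ab
  simp only [zero_smul, add_zero, Pi.mul_apply, Pi.div_apply, Pi.pow_apply, Pi.sub_apply, Pi.add_apply]
  have hD : k ^ 2 * (Lf C y) ^ 8 ≠ 0 := by
    exact mul_ne_zero (pow_ne_zero _ hk) (pow_ne_zero _ hC)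
  simp only [fr ((k * (Lf C y * Lf C y)) ^ 2) ((Lf C y) ^ 4)
      (pow_ne_zero _ (mul_ne_zero hk (mul_ne_zero hC hC))) hD (by ring),
    fr (k * (Lf C y) ^ 2) (k * (Lf C y) ^ 6) (mul_ne_zero hk (pow_ne_zero _ hC)) hD (by ring),
    fr (k * (Lf C y) ^ 3) (k * (Lf C y) ^ 5) (mul_ne_zero hk (pow_ne_zero _ hC)) hD (by ring)]
  simp only [div_eq_mul_inv]
  ring

lemma pd_H1ab (hk : k ≠ 0) (hC : Lf C y ≠ 0) :
    pd i (H1ab A B C k i) y = H2ab A B C k i y := by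
  have sA := slice_L A i y
  have sB := slice_L B i y
  have sC := slice_L C i y
  have hdd2 := (sC.mul sC).const_mul k
  have hdd3 := ((sC.mul sC).mul sC).const_mul k
  have hd20 : k * (Lf C (y + (0:ℝ) • (Pi.single i (1:ℝ) : Fin 4 → ℝ))
      * Lf C (y + (0:ℝ) • (Pi.single i (1:ℝ) : Fin 4 → ℝ))) ≠ 0 := by
    simpa using mul_ne_zero hk (mul_ne_zero hC hC)
  have hd30 : k * (Lf C (y + (0:ℝ) • (Pi.single i (1:ℝ) : Fin 4 → ℝ))
      * Lf C (y + (0:ℝ) • (Pi.single i (1:ℝ) : Fin 4 → ℝ))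
      * Lf C (y + (0:ℝ) • (Pi.single i (1:ℝ) : Fin 4 → ℝ))) ≠ 0 := by
    simpa using mul_ne_zero hk (mul_ne_zero (mul_ne_zero hC hC) hC)
  have t1 := ((sB.const_mul (A i)).add (sA.mul_const (B i))).div hdd2 hd20
  have t2 := ((sA.mul sB).const_mul (2 * C i)).div hdd3 hd30
  have h := t1.sub t2
  rw [pd_eq_of_hasDerivAt (h.congr_of_eventuallyEq
    (Filter.Eventually.of_forall fun t => by unfold H1ab; simp only [Pi.mul_apply, Pi.div_apply, Pi.pow_apply, Pi.sub_apply, Pi.add_apply]; ring))]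
  unfold H2ab
  simp only [zero_smul, add_zero, Pi.mul_apply, Pi.div_apply, Pi.pow_apply, Pi.sub_apply, Pi.add_apply]
  have hD : k ^ 2 * (Lf C y) ^ 8 ≠ 0 := by
    exact mul_ne_zero (pow_ne_zero _ hk) (pow_ne_zero _ hC)
  simp only [fr ((k * (Lf C y * Lf C y)) ^ 2) ((Lf C y) ^ 4)
      (pow_ne_zero _ (mul_ne_zero hk (mul_ne_zero hC hC))) hD (by ring),
    fr ((k * (Lf C y * Lf C y * Lf C y)) ^ 2) ((Lf C y) ^ 2)
      (pow_ne_zero _ (mul_ne_zero hk (mul_ne_zero (mul_ne_zero hC hC) hC))) hD (by ring),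
    fr (k * (Lf C y) ^ 2) (k * (Lf C y) ^ 6) (mul_ne_zero hk (pow_ne_zero _ hC)) hD (by ring),
    fr (k * (Lf C y) ^ 3) (k * (Lf C y) ^ 5) (mul_ne_zero hk (pow_ne_zero _ hC)) hD (by ring),
    fr (k * (Lf C y) ^ 4) (k * (Lf C y) ^ 4) (mul_ne_zero hk (pow_ne_zero _ hC)) hD (by ring)]
  simp only [div_eq_mul_inv]
  ring

lemma pd_Gab (hC : Lf C y ≠ 0) :
    pd i (Gab A C k0) y = G1ab A C k0 i y := by
  have sA := slice_L A i y
  have sC := slice_L C i y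
  have sS := slice_SC i y
  have hdd3 := (sC.mul sC).mul sC
  have hd30 : Lf C (y + (0:ℝ) • (Pi.single i (1:ℝ) : Fin 4 → ℝ))
      * Lf C (y + (0:ℝ) • (Pi.single i (1:ℝ) : Fin 4 → ℝ))
      * Lf C (y + (0:ℝ) • (Pi.single i (1:ℝ) : Fin 4 → ℝ)) ≠ 0 := by
    simpa using mul_ne_zero (mul_ne_zero hC hC) hC
  have h := ((sS.const_mul k0).mul sA).div hdd3 hd30
  rw [pd_eq_of_hasDerivAt (h.congr_of_eventuallyEq
    (Filter.Eventually.of_forall fun t => by unfold Gab; simp only [Pi.mul_apply, Pi.div_apply, Pi.pow_apply, Pi.sub_apply, Pi.add_apply]; ring))]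
  unfold G1ab
  simp only [zero_smul, add_zero, Pi.mul_apply, Pi.div_apply, Pi.pow_apply, Pi.sub_apply, Pi.add_apply]
  have hD : (Lf C y) ^ 8 ≠ 0 := pow_ne_zero _ hC
  simp only [fr ((Lf C y * Lf C y * Lf C y) ^ 2) ((Lf C y) ^ 2)
      (pow_ne_zero _ (mul_ne_zero (mul_ne_zero hC hC) hC)) hD (by ring),
    fr ((Lf C y) ^ 3) ((Lf C y) ^ 5) (pow_ne_zero _ hC) hD (by ring),
    fr ((Lf C y) ^ 4) ((Lf C y) ^ 4) (pow_ne_zero _ hC) hD (by ring)]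
  simp only [div_eq_mul_inv]
  ring

lemma pd_G1ab (hC : Lf C y ≠ 0) :
    pd i (G1ab A C k0 i) y = G2ab A C k0 i y := by
  have sA := slice_L A i y
  have sC := slice_L C i y
  have sS := slice_SC i y
  have scc := slice_cc i y
  have hdd3 := (sC.mul sC).mul sC
  have hdd4 := ((sC.mul sC).mul sC).mul sC
  have hd30 : Lf C (y + (0:ℝ) • (Pi.single i (1:ℝ) : Fin 4 → ℝ))
      * Lf C (y + (0:ℝ) • (Pi.single i (1:ℝ) : Fin 4 → ℝ))
      * Lf C (y + (0:ℝ) • (Pi.single i (1:ℝ) : Fin 4 → ℝ)) ≠ 0 := by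
    simpa using mul_ne_zero (mul_ne_zero hC hC) hC
  have hd40 : Lf C (y + (0:ℝ) • (Pi.single i (1:ℝ) : Fin 4 → ℝ))
      * Lf C (y + (0:ℝ) • (Pi.single i (1:ℝ) : Fin 4 → ℝ))
      * Lf C (y + (0:ℝ) • (Pi.single i (1:ℝ) : Fin 4 → ℝ))
      * Lf C (y + (0:ℝ) • (Pi.single i (1:ℝ) : Fin 4 → ℝ)) ≠ 0 := by
    simpa using mul_ne_zero (mul_ne_zero (mul_ne_zero hC hC) hC) hC
  have inner1 := ((scc.const_mul (2 * eta i)).mul sA).add (sS.mul_const (A i))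
  have t1 := inner1.div hdd3 hd30
  have t2 := ((sS.const_mul (3 * C i)).mul sA).div hdd4 hd40
  have h := (t1.sub t2).const_mul k0
  rw [pd_eq_of_hasDerivAt (h.congr_of_eventuallyEq
    (Filter.Eventually.of_forall fun t => by unfold G1ab; simp only [Pi.mul_apply, Pi.div_apply, Pi.pow_apply, Pi.sub_apply, Pi.add_apply]; ring))]
  unfold G2ab
  simp only [zero_smul, add_zero, Pi.mul_apply, Pi.div_apply, Pi.pow_apply, Pi.sub_apply, Pi.add_apply, Pi.zero_apply]
  have hD : (Lf C y) ^ 8 ≠ 0 := pow_ne_zero _ hC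
  simp only [fr ((Lf C y * Lf C y * Lf C y) ^ 2) ((Lf C y) ^ 2)
      (pow_ne_zero _ (mul_ne_zero (mul_ne_zero hC hC) hC)) hD (by ring),
    fr ((Lf C y * Lf C y * Lf C y * Lf C y) ^ 2) (1 : ℂ)
      (pow_ne_zero _ (mul_ne_zero (mul_ne_zero (mul_ne_zero hC hC) hC) hC)) hD (by ring),
    fr ((Lf C y) ^ 3) ((Lf C y) ^ 5) (pow_ne_zero _ hC) hD (by ring),
    fr ((Lf C y) ^ 4) ((Lf C y) ^ 4) (pow_ne_zero _ hC) hD (by ring),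
    fr ((Lf C y) ^ 5) ((Lf C y) ^ 3) (pow_ne_zero _ hC) hD (by ring)]
  simp only [div_eq_mul_inv]
  ring

lemma sum_H {d : ℂ} (hk : k ≠ 0) (hC : Lf C y ≠ 0)
    (hAB : -(A 0 * B 0) + A 1 * B 1 + A 2 * B 2 + A 3 * B 3 = 0)
    (hCA : -(C 0 * A 0) + C 1 * A 1 + C 2 * A 2 + C 3 * A 3 = 0)
    (hCB : -(C 0 * B 0) + C 1 * B 1 + C 2 * B 2 + C 3 * B 3 = 4 * k * d)
    (hCC : -(C 0 * C 0) + C 1 * C 1 + C 2 * C 2 + C 3 * C 3 = 0) :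
    -(H2ab A B C k 0 y) + H2ab A B C k 1 y + H2ab A B C k 2 y + H2ab A B C k 3 y
      = -16 * d * Lf A y / (Lf C y) ^ 3 := by
  have hD : k * (Lf C y) ^ 4 ≠ 0 := mul_ne_zero hk (pow_ne_zero _ hC)
  have e : -(H2ab A B C k 0 y) + H2ab A B C k 1 y + H2ab A B C k 2 y + H2ab A B C k 3 y
      = (2 * (-(A 0 * B 0) + A 1 * B 1 + A 2 * B 2 + A 3 * B 3) * (Lf C y) ^ 2
        - 4 * ((-(C 0 * A 0) + C 1 * A 1 + C 2 * A 2 + C 3 * A 3) * Lf B y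
          + (-(C 0 * B 0) + C 1 * B 1 + C 2 * B 2 + C 3 * B 3) * Lf A y) * Lf C y
        + 6 * (-(C 0 * C 0) + C 1 * C 1 + C 2 * C 2 + C 3 * C 3) * (Lf A y * Lf B y))
        / (k * (Lf C y) ^ 4) := by
    unfold H2ab
    simp only [fr (k * (Lf C y) ^ 2) ((Lf C y) ^ 2) (mul_ne_zero hk (pow_ne_zero _ hC)) hD (by ring),
      fr (k * (Lf C y) ^ 3) (Lf C y) (mul_ne_zero hk (pow_ne_zero _ hC)) hD (by ring)]
    simp only [div_eq_mul_inv]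
    ring
  rw [e, hAB, hCA, hCB, hCC, div_eq_div_iff hD (pow_ne_zero 3 hC)]
  ring

lemma sum_G (hC : Lf C y ≠ 0)
    (hCA : -(C 0 * A 0) + C 1 * A 1 + C 2 * A 2 + C 3 * A 3 = 0)
    (hCC : -(C 0 * C 0) + C 1 * C 1 + C 2 * C 2 + C 3 * C 3 = 0) :
    -(G2ab A C k0 0 y) + G2ab A C k0 1 y + G2ab A C k0 2 y + G2ab A C k0 3 y = 0 := by
  have hD : (Lf C y) ^ 5 ≠ 0 := pow_ne_zero _ hC
  have e : -(G2ab A C k0 0 y) + G2ab A C k0 1 y + G2ab A C k0 2 y + G2ab A C k0 3 y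
      = k0 * (-6 * ((lorSq y : ℝ) : ℂ) * ((-(C 0 * A 0) + C 1 * A 1 + C 2 * A 2 + C 3 * A 3)) * Lf C y
          + 12 * (-(C 0 * C 0) + C 1 * C 1 + C 2 * C 2 + C 3 * C 3) * (((lorSq y : ℝ) : ℂ) * Lf A y))
        / (Lf C y) ^ 5 := by
    unfold G2ab
    simp only [fr ((Lf C y) ^ 3) ((Lf C y) ^ 2) (pow_ne_zero _ hC) hD (by ring),
      fr ((Lf C y) ^ 4) (Lf C y) (pow_ne_zero _ hC) hD (by ring)]
    simp only [div_eq_mul_inv]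
    simp only [eta]
    norm_num
    unfold Lf
    simp only [lorSq]
    push_cast
    ring
  rw [e, hCA, hCC]
  simp

noncomputable def cA (q : Fin 3 → ℂ) : Fin 4 → ℂ :=
  ![-Complex.I * q 1, Complex.I * q 1, -q 2, Complex.I * q 2]

noncomputable def cB (p q : Fin 3 → ℂ) : Fin 4 → ℂ :=
  ![-Complex.I * (2 * p 1 * q 2 - p 2 * q 1), Complex.I * (2 * p 1 * q 2 - p 2 * q 1),
    -(p 2 * q 2), Complex.I * (p 2 * q 2)]

noncomputable def cC (q : Fin 3 → ℂ) : Fin 4 → ℂ :=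
  ![-Complex.I * q 2, -Complex.I * q 2, q 1, Complex.I * q 1]

variable {p q : Fin 3 → ℂ}

lemma q2_ne (h2 : q 0 * q 2 = (q 1) ^ 2) (h3 : p 1 * q 2 - p 2 * q 1 ≠ 0) : q 2 ≠ 0 := by
  intro h
  have hq1 : q 1 = 0 := by
    have : (q 1) ^ 2 = 0 := by rw [← h2, h, mul_zero]
    exact pow_eq_zero_iff (by norm_num) |>.mp this
  exact h3 (by rw [h, hq1]; ring)

lemma relAB :
    -(cA q 0 * cB p q 0) + cA q 1 * cB p q 1 + cA q 2 * cB p q 2 + cA q 3 * cB p q 3 = 0 := by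
  simp only [cA, cB, Matrix.cons_val_zero, Matrix.cons_val_one, Matrix.head_cons,
    Matrix.cons_val_two, Matrix.tail_cons, Matrix.cons_val_three]
  linear_combination (q 2 * (p 2 * q 2)) * Complex.I_sq

lemma relCA :
    -(cC q 0 * cA q 0) + cC q 1 * cA q 1 + cC q 2 * cA q 2 + cC q 3 * cA q 3 = 0 := by
  simp only [cA, cC, Matrix.cons_val_zero, Matrix.cons_val_one, Matrix.head_cons,
    Matrix.cons_val_two, Matrix.tail_cons, Matrix.cons_val_three]
  linear_combination (-(q 1 * q 2)) * Complex.I_sq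

lemma relCB :
    -(cC q 0 * cB p q 0) + cC q 1 * cB p q 1 + cC q 2 * cB p q 2 + cC q 3 * cB p q 3
      = 4 * q 2 * (p 1 * q 2 - p 2 * q 1) := by
  simp only [cB, cC, Matrix.cons_val_zero, Matrix.cons_val_one, Matrix.head_cons,
    Matrix.cons_val_two, Matrix.tail_cons, Matrix.cons_val_three]
  linear_combination (-2 * q 2 * (2 * p 1 * q 2 - p 2 * q 1) + q 1 * (p 2 * q 2)) * Complex.I_sq

lemma relCC :
    -(cC q 0 * cC q 0) + cC q 1 * cC q 1 + cC q 2 * cC q 2 + cC q 3 * cC q 3 = 0 := by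
  simp only [cC, Matrix.cons_val_zero, Matrix.cons_val_one, Matrix.head_cons,
    Matrix.cons_val_two, Matrix.tail_cons, Matrix.cons_val_three]
  linear_combination (q 1 * q 1) * Complex.I_sq

lemma factor_num (h1 : p 0 * (q 2) ^ 2 = q 1 * (2 * p 1 * q 2 - p 2 * q 1)) (y : Fin 4 → ℝ) :
    numStar p y * (q 2) ^ 2 = Lf (cA q) y * Lf (cB p q) y := by
  simp only [numStar, Lf, cA, cB, Matrix.cons_val_zero, Matrix.cons_val_one, Matrix.head_cons,
    Matrix.cons_val_two, Matrix.tail_cons, Matrix.cons_val_three]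
  linear_combination ((-Complex.I * (y 0 : ℂ) + Complex.I * (y 1 : ℂ)) ^ 2) * h1

lemma factor_den (h2 : q 0 * q 2 = (q 1) ^ 2) (y : Fin 4 → ℝ) :
    denStar q y * q 2 = (Lf (cC q) y) ^ 2 := by
  simp only [denStar, Lf, cC, Matrix.cons_val_zero, Matrix.cons_val_one, Matrix.head_cons,
    Matrix.cons_val_two, Matrix.tail_cons, Matrix.cons_val_three]
  linear_combination (((y 2 : ℂ) + Complex.I * (y 3 : ℂ)) ^ 2) * h2

lemma den_ne_iff (h2 : q 0 * q 2 = (q 1) ^ 2) (h3 : p 1 * q 2 - p 2 * q 1 ≠ 0) (y : Fin 4 → ℝ) :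
    denStar q y ≠ 0 ↔ Lf (cC q) y ≠ 0 := by
  have hk := q2_ne h2 h3
  constructor
  · intro h hc
    have := factor_den h2 y
    rw [hc] at this
    exact h (by
      have : denStar q y * q 2 = 0 := by rw [this]; ring
      rcases mul_eq_zero.mp this with h' | h'
      · exact h'
      · exact absurd h' hk)
  · intro h hd
    have := factor_den h2 y
    rw [hd, zero_mul] at this
    exact h (pow_eq_zero_iff (by norm_num) |>.mp this.symm)

lemma Uopen : IsOpen {y : Fin 4 → ℝ | Lf (cC q) y ≠ 0} := by
  have : {y : Fin 4 → ℝ | Lf (cC q) y ≠ 0} = (Lf (cC q)) ⁻¹' {0}ᶜ := rfl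
  rw [this]
  exact isOpen_compl_singleton.preimage (continuous_Lf (cC q))

lemma fStar_eq_Hab (h1 : p 0 * (q 2) ^ 2 = q 1 * (2 * p 1 * q 2 - p 2 * q 1))
    (h2 : q 0 * q 2 = (q 1) ^ 2) (h3 : p 1 * q 2 - p 2 * q 1 ≠ 0) :
    ∀ y ∈ {y : Fin 4 → ℝ | Lf (cC q) y ≠ 0},
      fStar p q y = Hab (cA q) (cB p q) (cC q) (q 2) y := by
  intro y hy
  have hC : Lf (cC q) y ≠ 0 := hy
  have hk := q2_ne h2 h3
  have hden : denStar q y ≠ 0 := (den_ne_iff h2 h3 y).mpr hC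
  unfold fStar Hab
  rw [div_eq_div_iff hden (mul_ne_zero hk (pow_ne_zero _ hC))]
  linear_combination (denStar q y) * (factor_num h1 y) - (numStar p y * q 2) * (factor_den h2 y)

lemma boxf (h1 : p 0 * (q 2) ^ 2 = q 1 * (2 * p 1 * q 2 - p 2 * q 1))
    (h2 : q 0 * q 2 = (q 1) ^ 2) (h3 : p 1 * q 2 - p 2 * q 1 ≠ 0)
    {x : Fin 4 → ℝ} (hx : Lf (cC q) x ≠ 0) :
    box (fStar p q) x = -16 * (p 1 * q 2 - p 2 * q 1) * Lf (cA q) x / (Lf (cC q) x) ^ 3 := by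
  have hk := q2_ne h2 h3
  have hxU : x ∈ {y : Fin 4 → ℝ | Lf (cC q) y ≠ 0} := hx
  have st1 : ∀ i : Fin 4, ∀ z ∈ {y : Fin 4 → ℝ | Lf (cC q) y ≠ 0},
      pd i (fStar p q) z = H1ab (cA q) (cB p q) (cC q) (q 2) i z := by
    intro i z hz
    exact (pd_congr Uopen (fStar_eq_Hab h1 h2 h3) hz i).trans (pd_Hab hk hz)
  have st2 : ∀ i : Fin 4, pd i (pd i (fStar p q)) x
      = H2ab (cA q) (cB p q) (cC q) (q 2) i x := by
    intro i
    exact (pd_congr Uopen (st1 i) hxU i).trans (pd_H1ab hk hx)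
  unfold box
  rw [st2 0, st2 1, st2 2, st2 3]
  exact sum_H hk hx relAB relCA relCB relCC

lemma boxG (h1 : p 0 * (q 2) ^ 2 = q 1 * (2 * p 1 * q 2 - p 2 * q 1))
    (h2 : q 0 * q 2 = (q 1) ^ 2) (h3 : p 1 * q 2 - p 2 * q 1 ≠ 0)
    {x : Fin 4 → ℝ} (hx : Lf (cC q) x ≠ 0) :
    box (fun y => -(lorSq y : ℂ) * box (fStar p q) y) x = 0 := by
  have hxU : x ∈ {y : Fin 4 → ℝ | Lf (cC q) y ≠ 0} := hx
  have inner_eq : ∀ z ∈ {y : Fin 4 → ℝ | Lf (cC q) y ≠ 0},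
      (fun y => -(lorSq y : ℂ) * box (fStar p q) y) z
        = Gab (cA q) (cC q) (16 * (p 1 * q 2 - p 2 * q 1)) z := by
    intro z hz
    simp only
    rw [boxf h1 h2 h3 hz]
    unfold Gab
    ring
  have st1 : ∀ i : Fin 4, ∀ z ∈ {y : Fin 4 → ℝ | Lf (cC q) y ≠ 0},
      pd i (fun y => -(lorSq y : ℂ) * box (fStar p q) y) z
        = G1ab (cA q) (cC q) (16 * (p 1 * q 2 - p 2 * q 1)) i z := by
    intro i z hz
    exact (pd_congr Uopen inner_eq hz i).trans (pd_Gab hz)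
  have st2 : ∀ i : Fin 4, pd i (pd i (fun y => -(lorSq y : ℂ) * box (fStar p q) y)) x
      = G2ab (cA q) (cC q) (16 * (p 1 * q 2 - p 2 * q 1)) i x := by
    intro i
    exact (pd_congr Uopen (st1 i) hxU i).trans (pd_G1ab hx)
  have hbox : box (fun y => -(lorSq y : ℂ) * box (fStar p q) y) x
      = -(pd 0 (pd 0 (fun y => -(lorSq y : ℂ) * box (fStar p q) y)) x)
        + pd 1 (pd 1 (fun y => -(lorSq y : ℂ) * box (fStar p q) y)) x
        + pd 2 (pd 2 (fun y => -(lorSq y : ℂ) * box (fStar p q) y)) x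
        + pd 3 (pd 3 (fun y => -(lorSq y : ℂ) * box (fStar p q) y)) x := rfl
  rw [hbox, st2 0, st2 1, st2 2, st2 3]
  exact sum_G hx relCA relCC

end S19

/-- with `p₁q₃² = q₂(2p₂q₃ − p₃q₂)`, `q₁q₃ = q₂²` and
`p₂q₃ − p₃q₂ ≠ 0`, on the open set `U ∩ {denominator ≠ 0}` inside the light cone one
has `□(−|x|²_L·□f̂*) = 0`, and `−|x|²_L·□f̂*` does not vanish identically there; hence
`f*` is a proper biharmonic function on its domain in the hyperbolic space `H³`. -/
theorem stmt_19 (p q : Fin 3 → ℂ)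
    (h1 : p 0 * (q 2) ^ 2 = q 1 * (2 * p 1 * q 2 - p 2 * q 1))
    (h2 : q 0 * q 2 = (q 1) ^ 2)
    (h3 : p 1 * q 2 - p 2 * q 1 ≠ 0) :
    (∀ x : Fin 4 → ℝ, lorSq x < 0 → 0 < x 0 → denStar q x ≠ 0 →
        box (fun y => -(lorSq y : ℂ) * box (fStar p q) y) x = 0) ∧
    (∃ x : Fin 4 → ℝ, lorSq x < 0 ∧ 0 < x 0 ∧ denStar q x ≠ 0 ∧
        -(lorSq x : ℂ) * box (fStar p q) x ≠ 0) := by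
  have hk := S19.q2_ne h2 h3
  constructor
  · intro x _ _ hden
    exact S19.boxG h1 h2 h3 ((S19.den_ne_iff h2 h3 x).mp hden)
  · by_cases hq1 : q 1 = 0
    · refine ⟨![1, 0, 1/2, 0], ?_, ?_, ?_, ?_⟩
      · norm_num [lorSq, Matrix.cons_val_two, Matrix.cons_val_three, Matrix.tail_cons, Matrix.head_cons]
      · norm_num
      · apply (S19.den_ne_iff h2 h3 _).mpr
        have : S19.Lf (S19.cC q) ![1, 0, 1/2, 0] = -Complex.I * q 2 := by
          simp [S19.Lf, S19.cC, hq1]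
        rw [this]
        simp [hk]
      · have hC : S19.Lf (S19.cC q) ![1, 0, 1/2, 0] = -Complex.I * q 2 := by
          simp [S19.Lf, S19.cC, hq1]
        have hCne : S19.Lf (S19.cC q) ![1, 0, 1/2, 0] ≠ 0 := by rw [hC]; simp [hk]
        have hA : S19.Lf (S19.cA q) ![1, 0, 1/2, 0] = -q 2 / 2 := by
          simp [S19.Lf, S19.cA, hq1]
          ring
        rw [S19.boxf h1 h2 h3 hCne]
        have hlv : lorSq ![1, 0, 1/2, 0] = -(3/4 : ℝ) := by norm_num [lorSq, Matrix.cons_val_two, Matrix.cons_val_three, Matrix.tail_cons, Matrix.head_cons]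
        rw [hlv, hA]
        have hnum : -16 * (p 1 * q 2 - p 2 * q 1) * (-q 2 / 2) ≠ 0 := by
          apply mul_ne_zero (mul_ne_zero (by norm_num) h3)
          simp [hk]
        have : -16 * (p 1 * q 2 - p 2 * q 1) * (-q 2 / 2)
            / S19.Lf (S19.cC q) ![1, 0, 1/2, 0] ^ 3 ≠ 0 :=
          div_ne_zero hnum (pow_ne_zero _ hCne)
        intro hcon
        apply this
        have hc2 : (-((-(3/4 : ℝ) : ℝ) : ℂ)) ≠ 0 := by norm_num
        exact (mul_eq_zero.mp hcon).resolve_left hc2 |>.symm ▸ rfl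
    · refine ⟨![1, 0, 0, 0], ?_, ?_, ?_, ?_⟩
      · norm_num [lorSq, Matrix.cons_val_two, Matrix.cons_val_three, Matrix.tail_cons, Matrix.head_cons]
      · norm_num
      · apply (S19.den_ne_iff h2 h3 _).mpr
        have : S19.Lf (S19.cC q) ![1, 0, 0, 0] = -Complex.I * q 2 := by
          simp [S19.Lf, S19.cC]
        rw [this]
        simp [hk]
      · have hC : S19.Lf (S19.cC q) ![1, 0, 0, 0] = -Complex.I * q 2 := by
          simp [S19.Lf, S19.cC]
        have hCne : S19.Lf (S19.cC q) ![1, 0, 0, 0] ≠ 0 := by rw [hC]; simp [hk]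
        have hA : S19.Lf (S19.cA q) ![1, 0, 0, 0] = -Complex.I * q 1 := by
          simp [S19.Lf, S19.cA]
        rw [S19.boxf h1 h2 h3 hCne]
        have hlv : lorSq ![1, 0, 0, 0] = -(1 : ℝ) := by norm_num [lorSq, Matrix.cons_val_two, Matrix.cons_val_three, Matrix.tail_cons, Matrix.head_cons]
        rw [hlv, hA]
        have hnum : -16 * (p 1 * q 2 - p 2 * q 1) * (-Complex.I * q 1) ≠ 0 := by
          apply mul_ne_zero (mul_ne_zero (by norm_num) h3)
          simp [Complex.I_ne_zero, hq1]
        have hfrac : -16 * (p 1 * q 2 - p 2 * q 1) * (-Complex.I * q 1)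
            / S19.Lf (S19.cC q) ![1, 0, 0, 0] ^ 3 ≠ 0 :=
          div_ne_zero hnum (pow_ne_zero _ hCne)
        intro hcon
        apply hfrac
        have hc2 : (-((-(1 : ℝ) : ℝ) : ℂ)) ≠ 0 := by norm_num
        exact (mul_eq_zero.mp hcon).resolve_left hc2 |>.symm ▸ rfl
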